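/- Assume f_1(1; x, s) > 0 for all (x, s) ∈ 𝒳 × {0,1}^{K−1}, and define the weight W := 1 / f_1(1; X, (R_2, …, R_K)). Then for every k ∈ {2,…,K}, every x ∈ 𝒳 and every (r_{k+1},…,r_K) ∈ {0,1}^{K−k} such that P(X = x, R_{k+1} = r_{k+1}, …, R_K = r_K, R_1 = 1) > 0, the propensity score of R_k admits the observed-data ratio representation f_k(1; x, (r_{k+1},…,r_K)) = E[1_{R_k = 1} · W | X = x, R_{k+1} = r_{k+1}, …, R_K = r_K, R_1 = 1] / E[W | X = x, R_{k+1} = r_{k+1}, …, R_K = r_K, R_1 = 1], where the conditional expectations are taken under (X, R) distributed according to p given the displayed event. -/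

import Mathlib

open Finset

theorem aux16
    (K : ℕ) (hK : 0 < K)
    (X : Fin K → Type) [∀ k, Fintype (X k)]
    (f : Fin K → Bool → (∀ k, X k) → (Fin K → Bool) → ℝ)
    (hfsum : ∀ k x r, f k false x r + f k true x r = 1)
    (hfdep : ∀ k b x (r r' : Fin K → Bool),
      (∀ i : Fin K, k < i → r i = r' i) → f k b x r = f k b x r')
    (k : Fin K) (hk : 0 < k.val)
    (x : ∀ k, X k) (s : Fin K → Bool) (c : Bool → ℝ) :
    ∑ r ∈ univ.filter
        (fun r : Fin K → Bool => r ⟨0, hK⟩ = true ∧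
          (∀ i : Fin K, 0 < i.val → i.val < 1 → r i = false) ∧
          ∀ i : Fin K, k < i → r i = s i),
      c (r k) * ∏ i ∈ univ.filter (fun i : Fin K => 1 ≤ i.val), f i (r i) x r
    = (c true * f k true x s + c false * f k false x s) *
      ∏ i ∈ univ.filter (fun i : Fin K => k < i), f i (s i) x s := by
  -- the step lemma
  have step : ∀ m : ℕ, 1 ≤ m → m < k.val →
      (∑ r ∈ univ.filter
        (fun r : Fin K → Bool => r ⟨0, hK⟩ = true ∧
          (∀ i : Fin K, 0 < i.val → i.val < m + 1 → r i = false) ∧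
          ∀ i : Fin K, k < i → r i = s i),
        c (r k) * ∏ i ∈ univ.filter (fun i : Fin K => m + 1 ≤ i.val), f i (r i) x r)
      = (∑ r ∈ univ.filter
        (fun r : Fin K → Bool => r ⟨0, hK⟩ = true ∧
          (∀ i : Fin K, 0 < i.val → i.val < m → r i = false) ∧
          ∀ i : Fin K, k < i → r i = s i),
        c (r k) * ∏ i ∈ univ.filter (fun i : Fin K => m ≤ i.val), f i (r i) x r) := by
    intro m hm1 hmk
    have hmK : m < K := lt_trans hmk k.isLt
    set j : Fin K := ⟨m, hmK⟩ with hj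
    have hjval : j.val = m := rfl
    have hne : ∀ i : Fin K, i.val ≠ m → i ≠ j := fun i h hh => h (by rw [hh])
    have hvalne : ∀ i : Fin K, i ≠ j → i.val ≠ m := fun i h hm => h (Fin.ext hm)
    have h0j : (⟨0, hK⟩ : Fin K) ≠ j := hne _ (by show (0:ℕ) ≠ m; omega)
    have hkj : k ≠ j := hne _ (by omega)
    have hhighne : ∀ i : Fin K, k < i → i ≠ j := fun i hi =>
      hne _ (by have := Fin.lt_def.mp hi; omega)
    -- product computation
    have hcomp : ∀ (r : Fin K → Bool) (b : Bool),
        ∏ i ∈ univ.filter (fun i : Fin K => m ≤ i.val),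
            f i (Function.update r j b i) x (Function.update r j b)
        = f j b x r * ∏ i ∈ univ.filter (fun i : Fin K => m + 1 ≤ i.val), f i (r i) x r := by
      intro r b
      have hset : univ.filter (fun i : Fin K => m ≤ i.val)
          = insert j (univ.filter (fun i : Fin K => m + 1 ≤ i.val)) := by
        ext i
        simp only [mem_filter, mem_univ, true_and, mem_insert]
        constructor
        · intro hi
          rcases eq_or_lt_of_le hi with h | h
          · left; exact Fin.ext h.symm
          · right; exact h
        · rintro (rfl | hi)
          · exact le_refl m
          · omega
      have hjnot : j ∉ univ.filter (fun i : Fin K => m + 1 ≤ i.val) := by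
        simp [hjval]
      rw [hset, prod_insert hjnot]
      congr 1
      · rw [Function.update_self]
        exact hfdep j b x _ r (fun i hi => Function.update_of_ne (by
          intro h; rw [h] at hi; exact lt_irrefl _ hi) _ _)
      · refine prod_congr rfl ?_
        intro i hi
        simp only [mem_filter, mem_univ, true_and] at hi
        have hij : i ≠ j := hne i (by omega)
        rw [Function.update_of_ne hij]
        exact hfdep i (r i) x _ r (fun l hl => Function.update_of_ne (by
          have := Fin.lt_def.mp hl
          exact hne l (by omega)) _ _)
    -- bijection
    rw [show (∑ r ∈ univ.filter
        (fun r : Fin K → Bool => r ⟨0, hK⟩ = true ∧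
          (∀ i : Fin K, 0 < i.val → i.val < m → r i = false) ∧
          ∀ i : Fin K, k < i → r i = s i),
        c (r k) * ∏ i ∈ univ.filter (fun i : Fin K => m ≤ i.val), f i (r i) x r)
      = ∑ rb ∈ (univ.filter
        (fun r : Fin K → Bool => r ⟨0, hK⟩ = true ∧
          (∀ i : Fin K, 0 < i.val → i.val < m + 1 → r i = false) ∧
          ∀ i : Fin K, k < i → r i = s i)) ×ˢ (univ : Finset Bool),
          c (rb.1 k) * (f j rb.2 x rb.1 *
            ∏ i ∈ univ.filter (fun i : Fin K => m + 1 ≤ i.val), f i (rb.1 i) x rb.1) from ?_]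
    · rw [Finset.sum_product]
      refine sum_congr rfl ?_
      intro r _
      rw [Fintype.sum_bool]
      simp only
      have h1 := hfsum j x r
      linear_combination (-(c (r k) *
        ∏ i ∈ univ.filter (fun i : Fin K => m + 1 ≤ i.val), f i (r i) x r)) * h1
    · refine Finset.sum_nbij' (fun r => (Function.update r j false, r j))
        (fun rb => Function.update rb.1 j rb.2) ?_ ?_ ?_ ?_ ?_
      · -- maps into product set
        intro r hr
        simp only [mem_filter, mem_univ, true_and, mem_product] at hr ⊢
        obtain ⟨h0, hlow, hhigh⟩ := hr
        refine ⟨⟨?_, ?_, ?_⟩, trivial⟩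
        · rw [Function.update_of_ne h0j]; exact h0
        · intro i hi1 hi2
          by_cases hij : i = j
          · rw [hij, Function.update_self]
          · rw [Function.update_of_ne hij]
            exact hlow i hi1 (by have := hvalne i hij; omega)
        · intro i hi
          rw [Function.update_of_ne (hhighne i hi)]
          exact hhigh i hi
      · -- maps back
        intro rb hrb
        simp only [mem_filter, mem_univ, true_and, mem_product] at hrb ⊢
        obtain ⟨⟨h0, hlow, hhigh⟩, -⟩ := hrb
        refine ⟨?_, ?_, ?_⟩
        · rw [Function.update_of_ne h0j]; exact h0
        · intro i hi1 hi2
          have hij : i ≠ j := hne i (by omega)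
          rw [Function.update_of_ne hij]
          exact hlow i hi1 (by omega)
        · intro i hi
          rw [Function.update_of_ne (hhighne i hi)]
          exact hhigh i hi
      · -- left inverse
        intro r hr
        simp only
        rw [Function.update_idem, Function.update_eq_self]
      · -- right inverse
        intro rb hrb
        obtain ⟨r, b⟩ := rb
        simp only [mem_filter, mem_univ, true_and, mem_product] at hrb
        obtain ⟨⟨h0, hlow, hhigh⟩, -⟩ := hrb
        have hjr : r j = false := hlow j (by rw [hjval]; omega) (by rw [hjval]; omega)
        simp only [Function.update_idem, Function.update_self, Prod.mk.injEq]
        exact ⟨Function.update_eq_self_iff.mpr hjr.symm, trivial⟩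
      · -- values
        intro r hr
        simp only
        have hur : Function.update (Function.update r j false) j (r j) = r := by
          rw [Function.update_idem, Function.update_eq_self]
        rw [Function.update_of_ne hkj, ← hcomp (Function.update r j false) (r j), hur]
  -- telescope down to m = k.val
  have main : ∀ m : ℕ, 1 ≤ m → m ≤ k.val →
      (∑ r ∈ univ.filter
        (fun r : Fin K → Bool => r ⟨0, hK⟩ = true ∧
          (∀ i : Fin K, 0 < i.val → i.val < 1 → r i = false) ∧
          ∀ i : Fin K, k < i → r i = s i),
        c (r k) * ∏ i ∈ univ.filter (fun i : Fin K => 1 ≤ i.val), f i (r i) x r)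
      = (∑ r ∈ univ.filter
        (fun r : Fin K → Bool => r ⟨0, hK⟩ = true ∧
          (∀ i : Fin K, 0 < i.val → i.val < m → r i = false) ∧
          ∀ i : Fin K, k < i → r i = s i),
        c (r k) * ∏ i ∈ univ.filter (fun i : Fin K => m ≤ i.val), f i (r i) x r) := by
    intro m hm1
    induction m, hm1 using Nat.le_induction with
    | base => intro _; rfl
    | succ n hn ih =>
      intro hsucc
      rw [step n hn (by omega)]
      exact ih (by omega)
  rw [main k.val (by omega) le_rfl]
  -- evaluate the two-point sum
  set ρ : Bool → (Fin K → Bool) := fun b i =>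
    if i = k then b else if i.val = 0 then true else if i.val < k.val then false else s i
    with hρ
  have hρk : ∀ b, ρ b k = b := fun b => by simp [hρ]
  have hk0 : (⟨0, hK⟩ : Fin K) ≠ k := fun h => by
    have : (0:ℕ) = k.val := congrArg Fin.val h
    omega
  have hset : univ.filter (fun i : Fin K => k.val ≤ i.val)
      = insert k (univ.filter (fun i : Fin K => k < i)) := by
    ext i
    simp only [mem_filter, mem_univ, true_and, mem_insert, Fin.lt_def]
    constructor
    · intro hi
      rcases eq_or_lt_of_le hi with h | h
      · left; exact Fin.ext h.symm
      · right; exact h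
    · rintro (rfl | hi)
      · exact le_refl _
      · omega
  have hknot : k ∉ univ.filter (fun i : Fin K => k < i) := by simp
  have hval : ∀ r : Fin K → Bool, (∀ i : Fin K, k < i → r i = s i) →
      ∏ i ∈ univ.filter (fun i : Fin K => k.val ≤ i.val), f i (r i) x r
      = f k (r k) x s * ∏ i ∈ univ.filter (fun i : Fin K => k < i), f i (s i) x s := by
    intro r hr
    rw [hset, prod_insert hknot]
    congr 1
    · exact hfdep k (r k) x r s hr
    · refine prod_congr rfl ?_
      intro i hi
      simp only [mem_filter, mem_univ, true_and] at hi
      rw [hr i hi]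
      exact hfdep i (s i) x r s (fun l hl => hr l (lt_trans hi hl))
  rw [show (∑ r ∈ univ.filter
        (fun r : Fin K → Bool => r ⟨0, hK⟩ = true ∧
          (∀ i : Fin K, 0 < i.val → i.val < k.val → r i = false) ∧
          ∀ i : Fin K, k < i → r i = s i),
        c (r k) * ∏ i ∈ univ.filter (fun i : Fin K => k.val ≤ i.val), f i (r i) x r)
      = ∑ b ∈ (univ : Finset Bool),
          c b * (f k b x s * ∏ i ∈ univ.filter (fun i : Fin K => k < i), f i (s i) x s)
      from ?_]
  · rw [Fintype.sum_bool]; ring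
  · refine Finset.sum_nbij' (fun r => r k) ρ (fun _ _ => mem_univ _) ?_ ?_ ?_ ?_
    · -- ρ b is in the set
      intro b _
      simp only [mem_filter, mem_univ, true_and]
      refine ⟨?_, ?_, ?_⟩
      · simp only [hρ]
        rw [if_neg hk0]
        simp
      · intro i hi1 hi2
        simp only [hρ]
        rw [if_neg (by intro h; have := congrArg Fin.val h; omega),
            if_neg (by omega), if_pos hi2]
      · intro i hi
        have hival := Fin.lt_def.mp hi
        simp only [hρ]
        rw [if_neg (by intro h; have := congrArg Fin.val h; omega),
            if_neg (by omega), if_neg (by omega)]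
    · -- left inverse
      intro r hr
      simp only [mem_filter, mem_univ, true_and] at hr
      obtain ⟨h0, hlow, hhigh⟩ := hr
      funext i
      simp only [hρ]
      by_cases h1 : i = k
      · subst h1; rw [if_pos rfl]
      · rw [if_neg h1]
        by_cases h2 : i.val = 0
        · rw [if_pos h2]
          have : i = ⟨0, hK⟩ := Fin.ext h2
          rw [this]
          exact h0.symm
        · rw [if_neg h2]
          by_cases h3 : i.val < k.val
          · rw [if_pos h3]
            exact (hlow i (by omega) h3).symm
          · rw [if_neg h3]
            refine (hhigh i ?_).symm
            rw [Fin.lt_def]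
            have : i.val ≠ k.val := fun h => h1 (Fin.ext h)
            omega
    · -- right inverse
      intro b _
      exact hρk b
    · -- values
      intro r hr
      simp only [mem_filter, mem_univ, true_and] at hr
      rw [hval r hr.2.2]


/-- Observed-data ratio representation of an identified propensity score:
with weight `W = 1 / f₁(1; X, (R₂,…,R_K))`, the propensity score of `R_k`
equals the ratio of the conditional expectations of `1_{R_k = 1} · W` and `W`
given `X = x`, the later indicators, and `R₁ = 1`. -/
theorem stmt_16
    (K : ℕ) (hK : 0 < K)
    (X : Fin K → Type) [∀ k, Fintype (X k)] [∀ k, Nonempty (X k)]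
    (q : (∀ k, X k) → ℝ)
    (hq0 : ∀ x, 0 ≤ q x) (hq1 : ∑ x, q x = 1)
    (f : Fin K → Bool → (∀ k, X k) → (Fin K → Bool) → ℝ)
    (hf0 : ∀ k b x r, 0 ≤ f k b x r)
    (hfsum : ∀ k x r, f k false x r + f k true x r = 1)
    (hfdep : ∀ k b x (r r' : Fin K → Bool),
      (∀ i : Fin K, k < i → r i = r' i) → f k b x r = f k b x r')
    (p : (∀ k, X k) → (Fin K → Bool) → ℝ)
    (hp : ∀ x r, p x r = q x * ∏ k, f k (r k) x r)
    (hf1 : ∀ x r, 0 < f ⟨0, hK⟩ true x r)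
    (k : Fin K) (hk : (⟨0, hK⟩ : Fin K) < k)
    (x : ∀ k, X k) (s : Fin K → Bool)
    (hpos : 0 < ∑ r ∈ univ.filter
        (fun r : Fin K → Bool => r ⟨0, hK⟩ = true ∧ ∀ i : Fin K, k < i → r i = s i), p x r) :
    f k true x s
      = ((∑ r ∈ univ.filter
            (fun r : Fin K → Bool => r ⟨0, hK⟩ = true ∧ ∀ i : Fin K, k < i → r i = s i),
            (if r k = true then (1 : ℝ) else 0) * (1 / f ⟨0, hK⟩ true x r) * p x r)
          / (∑ r ∈ univ.filter
            (fun r : Fin K → Bool => r ⟨0, hK⟩ = true ∧ ∀ i : Fin K, k < i → r i = s i), p x r))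
        / ((∑ r ∈ univ.filter
            (fun r : Fin K → Bool => r ⟨0, hK⟩ = true ∧ ∀ i : Fin K, k < i → r i = s i),
            (1 / f ⟨0, hK⟩ true x r) * p x r)
          / (∑ r ∈ univ.filter
            (fun r : Fin K → Bool => r ⟨0, hK⟩ = true ∧ ∀ i : Fin K, k < i → r i = s i),
            p x r)) := by
  have hkval : (0:ℕ) < k.val := hk
  have h0notin : (⟨0, hK⟩ : Fin K) ∉ univ.filter (fun i : Fin K => 1 ≤ i.val) := by simp
  have huniv : (univ : Finset (Fin K))
      = insert ⟨0, hK⟩ (univ.filter fun i : Fin K => 1 ≤ i.val) := by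
    ext i
    simp only [mem_univ, mem_insert, mem_filter, true_and, true_iff]
    by_cases h : i.val = 0
    · left; exact Fin.ext h
    · right; omega
  have hterm : ∀ r : Fin K → Bool, r ⟨0, hK⟩ = true →
      (1 / f ⟨0, hK⟩ true x r) * p x r
        = q x * ∏ i ∈ univ.filter (fun i : Fin K => 1 ≤ i.val), f i (r i) x r := by
    intro r h0
    have hpd : (∏ i, f i (r i) x r)
        = f ⟨0, hK⟩ (r ⟨0, hK⟩) x r
          * ∏ i ∈ univ.filter (fun i : Fin K => 1 ≤ i.val), f i (r i) x r := by
      conv_lhs => rw [huniv]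
      rw [prod_insert h0notin]
    rw [hp, hpd, h0]
    have hne := (hf1 x r).ne'
    field_simp
  have hfilter : (univ.filter
        (fun r : Fin K → Bool => r ⟨0, hK⟩ = true ∧ ∀ i : Fin K, k < i → r i = s i))
      = univ.filter (fun r : Fin K → Bool => r ⟨0, hK⟩ = true ∧
          (∀ i : Fin K, 0 < i.val → i.val < 1 → r i = false) ∧
          ∀ i : Fin K, k < i → r i = s i) := by
    apply filter_congr
    intro r _
    constructor
    · rintro ⟨h1, h2⟩
      exact ⟨h1, fun i a b => absurd b (by omega), h2⟩
    · rintro ⟨h1, _, h2⟩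
      exact ⟨h1, h2⟩
  have haux1 := aux16 K hK X f hfsum hfdep k hkval x s (fun _ => (1:ℝ))
  simp only [one_mul] at haux1
  have haux2 := aux16 K hK X f hfsum hfdep k hkval x s
    (fun b => if b = true then (1:ℝ) else 0)
  simp only [reduceIte, Bool.false_eq_true, one_mul, zero_mul, add_zero] at haux2
  have hS2 : (∑ r ∈ univ.filter
        (fun r : Fin K → Bool => r ⟨0, hK⟩ = true ∧ ∀ i : Fin K, k < i → r i = s i),
        (1 / f ⟨0, hK⟩ true x r) * p x r)
      = q x * ∏ i ∈ univ.filter (fun i : Fin K => k < i), f i (s i) x s := by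
    rw [hfilter]
    have e1 : ∑ r ∈ univ.filter (fun r : Fin K → Bool => r ⟨0, hK⟩ = true ∧
          (∀ i : Fin K, 0 < i.val → i.val < 1 → r i = false) ∧
          ∀ i : Fin K, k < i → r i = s i),
        (1 / f ⟨0, hK⟩ true x r) * p x r
        = ∑ r ∈ univ.filter (fun r : Fin K → Bool => r ⟨0, hK⟩ = true ∧
          (∀ i : Fin K, 0 < i.val → i.val < 1 → r i = false) ∧
          ∀ i : Fin K, k < i → r i = s i),
          q x * ∏ i ∈ univ.filter (fun i : Fin K => 1 ≤ i.val), f i (r i) x r := by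
      refine sum_congr rfl ?_
      intro r hr
      simp only [mem_filter, mem_univ, true_and] at hr
      exact hterm r hr.1
    rw [e1, ← Finset.mul_sum, haux1]
    have h1 : f k true x s + f k false x s = 1 := by linarith [hfsum k x s]
    rw [h1, one_mul]
  have hS1 : (∑ r ∈ univ.filter
        (fun r : Fin K → Bool => r ⟨0, hK⟩ = true ∧ ∀ i : Fin K, k < i → r i = s i),
        (if r k = true then (1 : ℝ) else 0) * (1 / f ⟨0, hK⟩ true x r) * p x r)
      = q x * (f k true x s *
          ∏ i ∈ univ.filter (fun i : Fin K => k < i), f i (s i) x s) := by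
    rw [hfilter]
    have e2 : ∑ r ∈ univ.filter (fun r : Fin K → Bool => r ⟨0, hK⟩ = true ∧
          (∀ i : Fin K, 0 < i.val → i.val < 1 → r i = false) ∧
          ∀ i : Fin K, k < i → r i = s i),
        (if r k = true then (1 : ℝ) else 0) * (1 / f ⟨0, hK⟩ true x r) * p x r
        = ∑ r ∈ univ.filter (fun r : Fin K → Bool => r ⟨0, hK⟩ = true ∧
          (∀ i : Fin K, 0 < i.val → i.val < 1 → r i = false) ∧
          ∀ i : Fin K, k < i → r i = s i),
          q x * ((if r k = true then (1 : ℝ) else 0)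
            * ∏ i ∈ univ.filter (fun i : Fin K => 1 ≤ i.val), f i (r i) x r) := by
      refine sum_congr rfl ?_
      intro r hr
      simp only [mem_filter, mem_univ, true_and] at hr
      rw [mul_assoc, hterm r hr.1]
      ring
    rw [e2, ← Finset.mul_sum, haux2]
  -- positivity
  have hpnn : ∀ r : Fin K → Bool, 0 ≤ p x r := by
    intro r
    rw [hp]
    exact mul_nonneg (hq0 x) (prod_nonneg fun i _ => hf0 i (r i) x r)
  obtain ⟨r0, hr0mem, hr0⟩ := Finset.exists_ne_zero_of_sum_ne_zero hpos.ne'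
  have hS2pos : 0 < ∑ r ∈ univ.filter
        (fun r : Fin K → Bool => r ⟨0, hK⟩ = true ∧ ∀ i : Fin K, k < i → r i = s i),
        (1 / f ⟨0, hK⟩ true x r) * p x r := by
    refine Finset.sum_pos' (fun r _ => mul_nonneg (one_div_nonneg.mpr (hf1 x r).le) (hpnn r)) ⟨r0, hr0mem, ?_⟩
    have hppos : 0 < p x r0 := lt_of_le_of_ne (hpnn r0) (Ne.symm hr0)
    have := hf1 x r0
    positivity
  have hqPpos : 0 < q x * ∏ i ∈ univ.filter (fun i : Fin K => k < i), f i (s i) x s := by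
    rw [← hS2]; exact hS2pos
  have hDne : (∑ r ∈ univ.filter
        (fun r : Fin K → Bool => r ⟨0, hK⟩ = true ∧ ∀ i : Fin K, k < i → r i = s i),
        p x r) ≠ 0 := hpos.ne'
  rw [hS1, hS2]
  rw [show q x * (f k true x s * ∏ i ∈ univ.filter (fun i : Fin K => k < i), f i (s i) x s)
      = f k true x s * (q x * ∏ i ∈ univ.filter (fun i : Fin K => k < i), f i (s i) x s)
    from by ring]
  rw [mul_div_assoc]
  exact (mul_div_cancel_right₀ _ (div_ne_zero hqPpos.ne' hDne)).symm
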